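/- (Key induction lemma, d ≥ 4.) Fix d ≥ 4, c₅ = 3.8/3, a constant c₈ > 1, a₀ ≥ (2c₈)^{10}, and the sequence aₙ = a₀^{c₅ⁿ} (so aₙ = a_{n-1}^{c₅}). Suppose (pₙ(u))_{n≥0} is a sequence in [0,1] satisfying the recursion pₙ(u) ≤ c₈·a_{n-1}^{2c₅−2}·(p_{n-1}(u)² + u·a_{n-1}^{2−c₅(d-1)}) for all n ≥ 1. Then for any u ≤ 1 and any n ≥ 0: if pₙ(u) ≤ aₙ^{(2−c₅(d-1))/2}, then also p_{n+1}(u) ≤ a_{n+1}^{(2−c₅(d-1))/2}. -/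

import Mathlib

open MeasureTheory

noncomputable section

theorem key_induction_lemma (d : ℕ) (hd : 4 ≤ d) (c₅ c₈ a₀ u : ℝ)
    (hc₅ : c₅ = 3.8 / 3) (hc₈ : 1 < c₈) (ha₀ : (2 * c₈) ^ 10 ≤ a₀)
    (a : ℕ → ℝ) (ha : ∀ n, a n = a₀ ^ (c₅ ^ n))
    (p : ℕ → ℝ) (hp01 : ∀ n, p n ∈ Set.Icc (0 : ℝ) 1)
    (hrec : ∀ n : ℕ, 1 ≤ n →
      p n ≤ c₈ * a (n - 1) ^ (2 * c₅ - 2) *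
        (p (n - 1) ^ 2 + u * a (n - 1) ^ (2 - c₅ * ((d : ℝ) - 1))))
    (hu : u ≤ 1) (n : ℕ)
    (hn : p n ≤ a n ^ ((2 - c₅ * ((d : ℝ) - 1)) / 2)) :
    p (n + 1) ≤ a (n + 1) ^ ((2 - c₅ * ((d : ℝ) - 1)) / 2) := by
  have h2c₈ : (2 : ℝ) < 2 * c₈ := by linarith
  have h2c₈0 : (0 : ℝ) ≤ 2 * c₈ := by linarith
  have ha₀1 : (1 : ℝ) < a₀ := by
    have : (1 : ℝ) < (2 * c₈) ^ 10 := one_lt_pow₀ (by linarith : (1:ℝ) < 2 * c₈) (by norm_num)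
    linarith
  have ha₀0 : (0 : ℝ) ≤ a₀ := by linarith
  set e : ℝ := 2 - c₅ * ((d : ℝ) - 1) with he
  set A : ℝ := a n with hA
  have hc₅1 : (1 : ℝ) ≤ c₅ := by rw [hc₅]; norm_num
  have hcn1 : (1 : ℝ) ≤ c₅ ^ n := one_le_pow₀ hc₅1
  have hA1 : (1 : ℝ) ≤ A := by
    rw [hA, ha n]
    calc (1:ℝ) = a₀ ^ (0:ℝ) := (Real.rpow_zero a₀).symm
    _ ≤ a₀ ^ (c₅ ^ n) := Real.rpow_le_rpow_of_exponent_le (le_of_lt ha₀1) (by linarith)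
  have hA0 : (0 : ℝ) < A := by linarith
  have hAa₀ : a₀ ≤ A := by
    rw [hA, ha n]
    calc a₀ = a₀ ^ (1:ℝ) := (Real.rpow_one a₀).symm
    _ ≤ a₀ ^ (c₅ ^ n) := Real.rpow_le_rpow_of_exponent_le (le_of_lt ha₀1) hcn1
  have hAsucc : a (n + 1) = A ^ c₅ := by
    rw [hA, ha n, ha (n+1), ← Real.rpow_mul ha₀0, pow_succ]
  -- recursion at n+1
  have hrec' : p (n + 1) ≤ c₈ * A ^ (2 * c₅ - 2) * (p n ^ 2 + u * A ^ e) := by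
    have := hrec (n + 1) (by omega)
    simpa [hA, he] using this
  have hpn0 : 0 ≤ p n := (hp01 n).1
  have hsq : p n ^ 2 ≤ A ^ e := by
    have h1 : p n ^ 2 ≤ (A ^ (e / 2)) ^ 2 := by
      apply pow_le_pow_left₀ hpn0 hn
    have h2 : (A ^ (e / 2)) ^ 2 = A ^ e := by
      rw [← Real.rpow_natCast (A ^ (e/2)) 2, ← Real.rpow_mul (le_of_lt hA0)]
      norm_num
    linarith [h1, h2.le, h2.ge]
  have hAe0 : (0 : ℝ) < A ^ e := Real.rpow_pos_of_pos hA0 e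
  have hue : u * A ^ e ≤ A ^ e := by nlinarith
  have hstep : p (n + 1) ≤ 2 * c₈ * A ^ (2 * c₅ - 2 + e) := by
    have h3 : c₈ * A ^ (2 * c₅ - 2) * (p n ^ 2 + u * A ^ e)
        ≤ c₈ * A ^ (2 * c₅ - 2) * (2 * A ^ e) := by
      apply mul_le_mul_of_nonneg_left (by linarith)
      positivity
    have h4 : c₈ * A ^ (2 * c₅ - 2) * (2 * A ^ e) = 2 * c₈ * A ^ (2 * c₅ - 2 + e) := by
      rw [Real.rpow_add hA0]; ring
    linarith
  -- final comparison
  set δ : ℝ := c₅ * (e / 2) - (2 * c₅ - 2 + e) with hδ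
  have hδ10 : (1 : ℝ) / 10 ≤ δ := by
    have hd' : (4 : ℝ) ≤ (d : ℝ) := by exact_mod_cast hd
    rw [hδ, he, hc₅]
    nlinarith
  have hkey : 2 * c₈ ≤ A ^ δ := by
    calc 2 * c₈ = ((2 * c₈) ^ 10) ^ ((1:ℝ)/10) := by
          rw [← Real.rpow_natCast (2 * c₈) 10, ← Real.rpow_mul h2c₈0]
          norm_num
    _ ≤ a₀ ^ ((1:ℝ)/10) := by
          apply Real.rpow_le_rpow (by positivity) ha₀ (by norm_num)
    _ ≤ A ^ ((1:ℝ)/10) := Real.rpow_le_rpow ha₀0 hAa₀ (by norm_num)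
    _ ≤ A ^ δ := Real.rpow_le_rpow_of_exponent_le hA1 hδ10
  have hfin : 2 * c₈ * A ^ (2 * c₅ - 2 + e) ≤ A ^ (c₅ * (e / 2)) := by
    have h5 : A ^ δ * A ^ (2 * c₅ - 2 + e) = A ^ (c₅ * (e / 2)) := by
      rw [← Real.rpow_add hA0, hδ]; ring_nf
    have h6 : 2 * c₈ * A ^ (2 * c₅ - 2 + e) ≤ A ^ δ * A ^ (2 * c₅ - 2 + e) := by
      apply mul_le_mul_of_nonneg_right hkey (le_of_lt (Real.rpow_pos_of_pos hA0 _))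
    linarith
  have hgoal : a (n + 1) ^ (e / 2) = A ^ (c₅ * (e / 2)) := by
    rw [hAsucc, ← Real.rpow_mul (le_of_lt hA0)]
  rw [hgoal]
  linarith

end
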